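/- Let (A,∘) be a finite-dimensional alternative algebra over a field of characteristic ≠ 2, let Â = A⋉_{r_∘*, l_∘*}A* be the semidirect sum with respect to the coadjoint bimodule (A*, r_∘*, l_∘*), and let 𝓑 be the symmetric bilinear form on Â given by 𝓑(x+a*, y+b*) = ⟨a*, y⟩ + ⟨x, b*⟩. For a linear map T: A* → A, the graph {(T(a*), a*) : a* ∈ A*} is a Lagrangian subalgebra of Â with respect to 𝓑 if and only if the element r ∈ A⊗A corresponding to T via ⟨u*⊗v*, r⟩ = ⟨u*, T(v*)⟩ is a skew-symmetric solution of the alternative Yang–Baxter equation in (A,∘). -/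

import Mathlib

open TensorProduct

universe u v w

variable {k : Type u} [Field k]

section Defs

variable {M : Type v} {V : Type w} [AddCommGroup M] [Module k M] [AddCommGroup V] [Module k V]

/-- Alternative algebra: both alternative laws. -/
def IsAlt (m : M →ₗ[k] M →ₗ[k] M) : Prop :=
  (∀ x y : M, m (m x x) y = m x (m x y)) ∧ (∀ x y : M, m (m y x) x = m y (m x x))

/-- right associator -/
def rAssoc (p s : M →ₗ[k] M →ₗ[k] M) (x y z : M) : M :=
  p (p x y) z - p x (p y z + s y z)

/-- middle associator -/
def mAssoc (p s : M →ₗ[k] M →ₗ[k] M) (x y z : M) : M :=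
  p (s x y) z - s x (p y z)

/-- left associator -/
def lAssoc (p s : M →ₗ[k] M →ₗ[k] M) (x y z : M) : M :=
  s (p x y + s x y) z - s x (s y z)

/-- Pre-alternative algebra. -/
def IsPreAlt (p s : M →ₗ[k] M →ₗ[k] M) : Prop :=
  (∀ x y z : M, mAssoc p s x y z + rAssoc p s y x z = 0) ∧
  (∀ x y z : M, mAssoc p s x y z + lAssoc p s x z y = 0) ∧
  (∀ x y : M, rAssoc p s y x x = 0) ∧
  (∀ x y : M, lAssoc p s x x y = 0)

/-- Bimodule of an alternative algebra. -/
def IsAltBimod (m : M →ₗ[k] M →ₗ[k] M) (L R : M →ₗ[k] Module.End k V) : Prop :=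
  (∀ x : M, L (m x x) = L x * L x) ∧
  (∀ x : M, R (m x x) = R x * R x) ∧
  (∀ x y : M, R y * L x - L x * R y = R (m x y) - R y * R x) ∧
  (∀ x y : M, L (m y x) - L y * L x = L y * R x - R x * L y)

/-- Bimodule of a pre-alternative algebra. -/
def IsPreAltBimod (p s : M →ₗ[k] M →ₗ[k] M) (Lp Rp Ls Rs : M →ₗ[k] Module.End k V) : Prop :=
  (∀ x y : M, Ls ((p x y + s x y) + (p y x + s y x)) = Ls x * Ls y + Ls y * Ls x) ∧
  (∀ x y : M, Rs y * ((Lp x + Ls x) + (Rp x + Rs x)) = Ls x * Rs y + Rs (s x y)) ∧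
  (∀ x y : M, Rp y * Ls x + Rp y * Rp x = Ls x * Rp y + Rp (p x y + s x y)) ∧
  (∀ x y : M, Rp y * Rs x + Rp y * Lp x = Rs (p x y) + Lp x * (Rp y + Rs y)) ∧
  (∀ x y : M, Lp (s x y) + Lp (p y x) = Ls x * Lp y + Lp y * (Lp x + Ls x)) ∧
  (∀ x y : M, Ls (p y x + s y x) + Rp x * Ls y = Ls y * Ls x + Ls y * Rp x) ∧
  (∀ x y : M, Rs y * (Rp x + Rs x) + Rp x * Rs y = Rs (s x y) + Rs (p y x)) ∧
  (∀ x y : M, Rs x * (Lp y + Ls y) + Lp (s y x) = Ls y * Rs x + Ls y * Lp x) ∧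
  (∀ x y : M, Rp y * Rp x + Rp x * Rp y = Rp ((p x y + s x y) + (p y x + s y x))) ∧
  (∀ x y : M, Rp y * Lp x + Lp (p x y) = Lp x * ((Rp y + Rs y) + (Lp y + Ls y)))

/-- Dual family of endomorphisms: `(dualT L) x = (L x)^*`. -/
noncomputable def dualT (L : M →ₗ[k] Module.End k V) :
    M →ₗ[k] Module.End k (Module.Dual k V) :=
  (Module.Dual.transpose (R := k) (M := V) (M' := V)) ∘ₗ L

/-- The linear map `A* → A` associated to an element of `A ⊗ A`:
`⟨u* ⊗ v*, r⟩ = ⟨u*, T_r v*⟩`, i.e. `T_r(v*) = Σ v*(bᵢ) • aᵢ`. -/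
noncomputable def Tr : (M ⊗[k] M) →ₗ[k] Module.Dual k M →ₗ[k] M :=
  TensorProduct.lift (LinearMap.mk₂ k
    (fun a b => (Module.Dual.eval k M b).smulRight a)
    (fun a a' b => by ext f; simp)
    (fun c a b => by ext f; simp only [LinearMap.smulRight_apply, LinearMap.smul_apply,
      Module.Dual.eval_apply]; exact smul_comm _ _ _)
    (fun a b b' => by ext f; simp [add_smul])
    (fun c a b => by ext f; simp [map_smul, mul_smul]))

noncomputable def tlift (m : M →ₗ[k] M →ₗ[k] M) : M ⊗[k] M →ₗ[k] M := TensorProduct.lift m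

/-- `r₁₂ ⋄ r₁₃` : `(a⊗b)⊗(c⊗d) ↦ (a⋄c)⊗b⊗d`. -/
noncomputable def comp12_13 (m : M →ₗ[k] M →ₗ[k] M) :
    (M ⊗[k] M) ⊗[k] (M ⊗[k] M) →ₗ[k] M ⊗[k] (M ⊗[k] M) :=
  (TensorProduct.map (tlift m) LinearMap.id) ∘ₗ
    (TensorProduct.tensorTensorTensorComm k M M M M).toLinearMap

/-- `r₁₃ ⋄ r₁₂` : `(a⊗b)⊗(c⊗d) ↦ (a⋄c)⊗d⊗b`. -/
noncomputable def comp13_12 (m : M →ₗ[k] M →ₗ[k] M) :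
    (M ⊗[k] M) ⊗[k] (M ⊗[k] M) →ₗ[k] M ⊗[k] (M ⊗[k] M) :=
  (TensorProduct.map (tlift m) (TensorProduct.comm k M M).toLinearMap) ∘ₗ
    (TensorProduct.tensorTensorTensorComm k M M M M).toLinearMap

/-- `r₁₂ ⋄ r₂₃` : `(a⊗b)⊗(c⊗d) ↦ a⊗(b⋄c)⊗d`. -/
noncomputable def comp12_23 (m : M →ₗ[k] M →ₗ[k] M) :
    (M ⊗[k] M) ⊗[k] (M ⊗[k] M) →ₗ[k] M ⊗[k] (M ⊗[k] M) :=
  (TensorProduct.map LinearMap.id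
      ((TensorProduct.map (tlift m) LinearMap.id) ∘ₗ
        (TensorProduct.assoc k M M M).symm.toLinearMap)) ∘ₗ
    (TensorProduct.assoc k M M (M ⊗[k] M)).toLinearMap

/-- `r₂₃ ⋄ r₁₂` : `(a⊗b)⊗(c⊗d) ↦ c⊗(a⋄d)⊗b`. -/
noncomputable def comp23_12 (m : M →ₗ[k] M →ₗ[k] M) :
    (M ⊗[k] M) ⊗[k] (M ⊗[k] M) →ₗ[k] M ⊗[k] (M ⊗[k] M) :=
  (TensorProduct.map LinearMap.id
      ((TensorProduct.map (tlift m.flip) LinearMap.id) ∘ₗ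
        (TensorProduct.assoc k M M M).symm.toLinearMap)) ∘ₗ
    (TensorProduct.assoc k M M (M ⊗[k] M)).toLinearMap ∘ₗ
    (TensorProduct.comm k (M ⊗[k] M) (M ⊗[k] M)).toLinearMap

/-- `r₁₃ ⋄ r₂₃` : `(a⊗b)⊗(c⊗d) ↦ a⊗c⊗(b⋄d)`. -/
noncomputable def comp13_23 (m : M →ₗ[k] M →ₗ[k] M) :
    (M ⊗[k] M) ⊗[k] (M ⊗[k] M) →ₗ[k] M ⊗[k] (M ⊗[k] M) :=
  (TensorProduct.map LinearMap.id (TensorProduct.map LinearMap.id (tlift m))) ∘ₗ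
    (TensorProduct.assoc k M M (M ⊗[k] M)).toLinearMap ∘ₗ
    (TensorProduct.tensorTensorTensorComm k M M M M).toLinearMap

/-- `r₂₃ ⋄ r₁₃` : `(a⊗b)⊗(c⊗d) ↦ c⊗a⊗(b⋄d)`. -/
noncomputable def comp23_13 (m : M →ₗ[k] M →ₗ[k] M) :
    (M ⊗[k] M) ⊗[k] (M ⊗[k] M) →ₗ[k] M ⊗[k] (M ⊗[k] M) :=
  (TensorProduct.map LinearMap.id (TensorProduct.map LinearMap.id (tlift m))) ∘ₗ
    (TensorProduct.assoc k M M (M ⊗[k] M)).toLinearMap ∘ₗ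
    (TensorProduct.map (TensorProduct.comm k M M).toLinearMap LinearMap.id) ∘ₗ
    (TensorProduct.tensorTensorTensorComm k M M M M).toLinearMap

/-- The alternative Yang–Baxter expression `r₂₃∘r₁₂ − r₁₂∘r₁₃ − r₁₃∘r₂₃`. -/
noncomputable def ayb (m : M →ₗ[k] M →ₗ[k] M) (r : M ⊗[k] M) : M ⊗[k] (M ⊗[k] M) :=
  comp23_12 m (r ⊗ₜ r) - comp12_13 m (r ⊗ₜ r) - comp13_23 m (r ⊗ₜ r)

/-- PA-equations. -/
noncomputable def PA11 (p s : M →ₗ[k] M →ₗ[k] M) (r : M ⊗[k] M) : M ⊗[k] (M ⊗[k] M) :=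
  comp12_13 (p + s) (r ⊗ₜ r) - comp23_12 s (r ⊗ₜ r) - comp13_23 p (r ⊗ₜ r)

noncomputable def PA12 (p s : M →ₗ[k] M →ₗ[k] M) (r : M ⊗[k] M) : M ⊗[k] (M ⊗[k] M) :=
  comp13_12 (p + s) (r ⊗ₜ r) - comp12_23 p (r ⊗ₜ r) - comp23_13 s (r ⊗ₜ r)

noncomputable def PA21 (p s : M →ₗ[k] M →ₗ[k] M) (r : M ⊗[k] M) : M ⊗[k] (M ⊗[k] M) :=
  comp12_23 (p + s) (r ⊗ₜ r) - comp23_13 p (r ⊗ₜ r) - comp13_12 s (r ⊗ₜ r)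

noncomputable def PA22 (p s : M →ₗ[k] M →ₗ[k] M) (r : M ⊗[k] M) : M ⊗[k] (M ⊗[k] M) :=
  comp23_12 (p + s) (r ⊗ₜ r) - comp13_23 s (r ⊗ₜ r) - comp12_13 p (r ⊗ₜ r)

noncomputable def PA31 (p s : M →ₗ[k] M →ₗ[k] M) (r : M ⊗[k] M) : M ⊗[k] (M ⊗[k] M) :=
  comp13_23 (p + s) (r ⊗ₜ r) - comp12_13 s (r ⊗ₜ r) - comp23_12 p (r ⊗ₜ r)

noncomputable def PA32 (p s : M →ₗ[k] M →ₗ[k] M) (r : M ⊗[k] M) : M ⊗[k] (M ⊗[k] M) :=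
  comp23_13 (p + s) (r ⊗ₜ r) - comp13_12 p (r ⊗ₜ r) - comp12_23 s (r ⊗ₜ r)

/-- Semidirect sum product on `M × V` for an alternative algebra `M` and a bimodule `(V,L,R)`. -/
def sd (m : M →ₗ[k] M →ₗ[k] M) (L R : M →ₗ[k] Module.End k V) :
    (M × V) →ₗ[k] (M × V) →ₗ[k] (M × V) :=
  LinearMap.mk₂ k (fun x y => (m x.1 y.1, L x.1 y.2 + R y.1 x.2))
    (fun x x' y => by refine Prod.ext ?_ ?_ <;> simp [map_add] <;> abel)
    (fun c x y => by refine Prod.ext ?_ ?_ <;> simp [map_smul, smul_add])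
    (fun x y y' => by refine Prod.ext ?_ ?_ <;> simp [map_add] <;> abel)
    (fun c x y => by refine Prod.ext ?_ ?_ <;> simp [map_smul, smul_add])

end Defs
section Aux

variable {A : Type v} [AddCommGroup A] [Module k A]

/-- Evaluation of a pair of functionals on `A ⊗ A`. -/
noncomputable def ev2 (a b : Module.Dual k A) : A ⊗[k] A →ₗ[k] k :=
  TensorProduct.lift ((LinearMap.mul k k).compl₁₂ a b)

@[simp] lemma ev2_tmul (a b : Module.Dual k A) (y z : A) :
    ev2 a b (y ⊗ₜ z) = a y * b z := rfl

/-- Contraction `x ⊗ (y ⊗ z) ↦ (a y * b z) • x`. -/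
noncomputable def Phi (a b : Module.Dual k A) : A ⊗[k] (A ⊗[k] A) →ₗ[k] A :=
  (TensorProduct.rid k A).toLinearMap ∘ₗ TensorProduct.map LinearMap.id (ev2 a b)

@[simp] lemma Phi_tmul (a b : Module.Dual k A) (x y z : A) :
    Phi a b (x ⊗ₜ (y ⊗ₜ z)) = (a y * b z) • x := by
  simp [Phi, TensorProduct.rid_tmul]

@[simp] lemma Tr_tmul (x y : A) (a : Module.Dual k A) :
    Tr (x ⊗ₜ[k] y) a = a y • x := rfl

@[simp] lemma dualT_apply (L : A →ₗ[k] Module.End k A) (x : A) (a : Module.Dual k A) (y : A) :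
    dualT L x a y = a (L x y) := rfl

end Aux
section Aux2

variable {A : Type v} [AddCommGroup A] [Module k A]

lemma phi_comp12_13 (m : A →ₗ[k] A →ₗ[k] A) (a b : Module.Dual k A) (q₁ q₂ : A ⊗[k] A) :
    Phi a b (comp12_13 m (q₁ ⊗ₜ q₂)) = m (Tr q₁ a) (Tr q₂ b) := by
  induction q₁ using TensorProduct.induction_on with
  | zero => simp [TensorProduct.zero_tmul]
  | tmul c d =>
    induction q₂ using TensorProduct.induction_on with
    | zero => simp [TensorProduct.tmul_zero]
    | tmul e f =>
      simp [comp12_13, tlift, smul_smul, mul_comm]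
    | add u v hu hv =>
      simp only [TensorProduct.tmul_add, map_add, hu, hv, LinearMap.add_apply]
  | add u v hu hv =>
    simp only [TensorProduct.add_tmul, map_add, hu, hv, LinearMap.add_apply]

lemma phi_comp23_12 (m : A →ₗ[k] A →ₗ[k] A) (a b : Module.Dual k A) (q₁ q₂ : A ⊗[k] A) :
    Phi a b (comp23_12 m (q₁ ⊗ₜ q₂)) = Tr q₂ (dualT m (Tr q₁ b) a) := by
  induction q₁ using TensorProduct.induction_on with
  | zero => simp [TensorProduct.zero_tmul]
  | tmul c d =>
    induction q₂ using TensorProduct.induction_on with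
    | zero => simp [TensorProduct.tmul_zero]
    | tmul e f =>
      simp [comp23_12, tlift, smul_smul, mul_comm]
    | add u v hu hv =>
      simp only [TensorProduct.tmul_add, map_add, hu, hv, LinearMap.add_apply]
  | add u v hu hv =>
    simp only [TensorProduct.add_tmul, map_add, hu, hv, LinearMap.add_apply]

lemma phi_comp13_23 (m : A →ₗ[k] A →ₗ[k] A) (a b : Module.Dual k A) (q₁ q₂ : A ⊗[k] A) :
    Phi a b (comp13_23 m (q₁ ⊗ₜ q₂)) =
      Tr q₁ (dualT m.flip (Tr (TensorProduct.comm k A A q₂) a) b) := by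
  induction q₁ using TensorProduct.induction_on with
  | zero => simp [TensorProduct.zero_tmul]
  | tmul c d =>
    induction q₂ using TensorProduct.induction_on with
    | zero => simp [TensorProduct.tmul_zero]
    | tmul e f =>
      simp [comp13_23, tlift, smul_smul, mul_comm]
    | add u v hu hv =>
      simp only [TensorProduct.tmul_add, map_add, hu, hv, LinearMap.add_apply]
  | add u v hu hv =>
    simp only [TensorProduct.add_tmul, map_add, hu, hv, LinearMap.add_apply]

lemma tr_comm_apply (q : A ⊗[k] A) (a b : Module.Dual k A) :
    b (Tr (TensorProduct.comm k A A q) a) = a (Tr q b) := by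
  induction q using TensorProduct.induction_on with
  | zero => simp
  | tmul x y => simp [mul_comm]
  | add u v hu hv => simp only [map_add, LinearMap.add_apply, hu, hv]

end Aux2
section Aux3

variable {A : Type v} [AddCommGroup A] [Module k A] [FiniteDimensional k A]

lemma tr_eq_zero {q : A ⊗[k] A} (h : ∀ a b : Module.Dual k A, b (Tr q a) = 0) : q = 0 := by
  classical
  set B := Module.finBasis k A
  have key : ∀ (q : A ⊗[k] A) (i j : Fin (Module.finrank k A)),
      (B.tensorProduct B).repr q (i, j) = B.coord i (Tr q (B.coord j)) := by
    intro q i j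
    induction q using TensorProduct.induction_on with
    | zero => simp
    | tmul x y =>
      simp [Module.Basis.tensorProduct_repr_tmul_apply, Module.Basis.coord_apply, mul_comm]
    | add u v hu hv => simp only [map_add, Finsupp.add_apply, LinearMap.add_apply, hu, hv]
  have : (B.tensorProduct B).repr q = 0 := by
    ext p
    obtain ⟨i, j⟩ := p
    rw [key, h]
    simp
  simpa using (B.tensorProduct B).repr.map_eq_zero_iff.mp (by simpa using this)

lemma phi_eq_zero {q : A ⊗[k] (A ⊗[k] A)}
    (h : ∀ a b : Module.Dual k A, Phi a b q = 0) : q = 0 := by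
  classical
  set B := Module.finBasis k A
  have key : ∀ (q : A ⊗[k] (A ⊗[k] A)) (i j l : Fin (Module.finrank k A)),
      (B.tensorProduct (B.tensorProduct B)).repr q (i, (j, l)) =
        B.coord i (Phi (B.coord j) (B.coord l) q) := by
    intro q i j l
    induction q using TensorProduct.induction_on with
    | zero => simp
    | tmul x w =>
      induction w using TensorProduct.induction_on with
      | zero => simp
      | tmul y z =>
        simp only [Module.Basis.tensorProduct_repr_tmul_apply, Phi_tmul, map_smul,
          Module.Basis.coord_apply, smul_eq_mul]
        ring
      | add u v hu hv =>
        simp only [TensorProduct.tmul_add, map_add, Finsupp.add_apply, LinearMap.add_apply,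
          hu, hv]
    | add u v hu hv =>
      simp only [map_add, Finsupp.add_apply, LinearMap.add_apply, hu, hv]
  have hz : (B.tensorProduct (B.tensorProduct B)).repr q = 0 := by
    ext p
    obtain ⟨i, j, l⟩ := p
    rw [key, h]
    simp
  simpa using (B.tensorProduct (B.tensorProduct B)).repr.map_eq_zero_iff.mp (by simpa using hz)

end Aux3
theorem stmt11 {A : Type v} [AddCommGroup A] [Module k A] [FiniteDimensional k A]
    (hchar : (2 : k) ≠ 0) (m : A →ₗ[k] A →ₗ[k] A) (halt : IsAlt m)
    (T : Module.Dual k A →ₗ[k] A) (r : A ⊗[k] A) (hr : Tr r = T) :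
    ((∀ q : A × Module.Dual k A,
        q ∈ LinearMap.range (T.prod (LinearMap.id : Module.Dual k A →ₗ[k] Module.Dual k A)) ↔
          ∀ w ∈ LinearMap.range (T.prod (LinearMap.id : Module.Dual k A →ₗ[k] Module.Dual k A)),
            q.2 w.1 + w.2 q.1 = 0) ∧
      (∀ q1 ∈ LinearMap.range (T.prod (LinearMap.id : Module.Dual k A →ₗ[k] Module.Dual k A)),
        ∀ q2 ∈ LinearMap.range (T.prod (LinearMap.id : Module.Dual k A →ₗ[k] Module.Dual k A)),
          sd m (dualT m.flip) (dualT m) q1 q2 ∈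
            LinearMap.range (T.prod (LinearMap.id : Module.Dual k A →ₗ[k] Module.Dual k A)))) ↔
    (TensorProduct.comm k A A r = -r ∧ ayb m r = 0) := by
  subst hr
  have memg : ∀ (x : A) (c : Module.Dual k A),
      (x, c) ∈ LinearMap.range
        ((Tr r).prod (LinearMap.id : Module.Dual k A →ₗ[k] Module.Dual k A)) ↔ x = Tr r c := by
    intro x c
    constructor
    · rintro ⟨d, hd⟩
      simp only [LinearMap.prod_apply, Function.prod, LinearMap.id_apply, Prod.mk.injEq] at hd
      obtain ⟨h1, h2⟩ := hd
      rw [← h1, h2]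
    · intro h
      exact ⟨c, by simp only [LinearMap.prod_apply, Function.prod, LinearMap.id_apply, h]⟩
  have sd_apply : ∀ a b : Module.Dual k A,
      sd m (dualT m.flip) (dualT m) (Tr r a, a) (Tr r b, b)
        = (m (Tr r a) (Tr r b), dualT m.flip (Tr r a) b + dualT m (Tr r b) a) := fun a b => rfl
  have memg' : ∀ c : Module.Dual k A,
      ((Tr r).prod (LinearMap.id : Module.Dual k A →ₗ[k] Module.Dual k A)) c
        = (Tr r c, c) := fun c => rfl
  constructor
  · rintro ⟨h1, h2⟩
    have skewT : ∀ a b : Module.Dual k A, a (Tr r b) + b (Tr r a) = 0 := by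
      intro a b
      have hq := (h1 (Tr r a, a)).mp ⟨a, memg' a⟩ (Tr r b, b) ⟨b, memg' b⟩
      simpa using hq
    have hskew : TensorProduct.comm k A A r = -r := by
      have h0 : TensorProduct.comm k A A r + r = 0 := by
        apply tr_eq_zero
        intro a b
        rw [map_add, LinearMap.add_apply, map_add, tr_comm_apply]
        exact skewT a b
      exact eq_neg_of_add_eq_zero_left h0
    refine ⟨hskew, ?_⟩
    have star : ∀ a b : Module.Dual k A,
        Tr r (dualT m.flip (Tr r a) b) + Tr r (dualT m (Tr r b) a)
          = m (Tr r a) (Tr r b) := by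
      intro a b
      have h := h2 (Tr r a, a) ⟨a, memg' a⟩ (Tr r b, b) ⟨b, memg' b⟩
      rw [sd_apply] at h
      have := (memg _ _).mp h
      rw [map_add] at this
      exact this.symm
    apply phi_eq_zero
    intro a b
    rw [ayb, map_sub, map_sub, phi_comp23_12, phi_comp12_13, phi_comp13_23, hskew]
    simp only [map_neg, LinearMap.neg_apply]
    rw [sub_neg_eq_add, ← star a b]
    abel
  · rintro ⟨hskew, hayb⟩
    have skewT : ∀ a b : Module.Dual k A, a (Tr r b) + b (Tr r a) = 0 := by
      intro a b
      have h := tr_comm_apply r a b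
      rw [hskew] at h
      simp only [map_neg, LinearMap.neg_apply] at h
      linear_combination -h
    have key : ∀ a b : Module.Dual k A,
        Tr r (dualT m (Tr r b) a) + Tr r (dualT m.flip (Tr r a) b)
          = m (Tr r a) (Tr r b) := by
      intro a b
      have hk : Phi a b (ayb m r) = 0 := by rw [hayb]; simp
      rw [ayb, map_sub, map_sub, phi_comp23_12, phi_comp12_13, phi_comp13_23, hskew] at hk
      simp only [map_neg, LinearMap.neg_apply] at hk
      rw [sub_neg_eq_add, sub_add_eq_add_sub, sub_eq_zero] at hk
      exact hk
    constructor
    · intro q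
      constructor
      · rintro ⟨c, rfl⟩ w ⟨d, rfl⟩
        simp only [memg', LinearMap.prod_apply, Function.prod, LinearMap.id_apply]
        exact skewT c d
      · intro hq
        have hv : ∀ b : Module.Dual k A, b (q.1 - Tr r q.2) = 0 := by
          intro b
          have ha := hq (Tr r b, b) ⟨b, memg' b⟩
          have hb := skewT q.2 b
          rw [map_sub]
          linear_combination ha - hb
        have hq1 : q.1 = Tr r q.2 :=
          sub_eq_zero.mp ((Module.forall_dual_apply_eq_zero_iff k _).mp hv)
        exact ⟨q.2, by rw [memg', ← hq1]⟩
    · rintro q1 ⟨a, rfl⟩ q2 ⟨b, rfl⟩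
      rw [memg' a, memg' b, sd_apply, memg, map_add]
      rw [add_comm]
      exact (key a b).symm
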